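/- Let Γ be a group generated by two elements α, β, and suppose there is a surjective group homomorphism φ: Γ → ℤ ∗ ℤ/5ℤ with φ(α) = a (the generator of the factor ℤ) and φ(α·β) = b (the generator of the factor ℤ/5ℤ), such that the kernel of φ is the cyclic subgroup generated by (α·β)^5, the element (α·β)^5 is central in Γ, and (α·β)^5 has infinite order. Then the homomorphism from the presented group A = ⟨x, y | (xy)^5 = (yx)^5⟩ to Γ sending x ↦ α and y ↦ β is a group isomorphism; in particular Γ is generated by α, β subject to the single relation (αβ)^5 = (βα)^5. -/
import Mathlib

/-- The single defining relator `(xy)^5·((yx)^5)⁻¹` of the dihedral-type Artin group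
`A = ⟨x, y ∣ (xy)^5 = (yx)^5⟩`, where `x`, `y` are the two generators of the free group. -/
def artinRelator : Set (FreeGroup (Fin 2)) :=
  {(FreeGroup.of 0 * FreeGroup.of 1) ^ 5 * ((FreeGroup.of 1 * FreeGroup.of 0) ^ 5)⁻¹}

private lemma conj_pow_aux {G : Type*} [Group G] (a b : G) (n : ℕ) :
    (a * b) ^ n * a = a * (b * a) ^ n := by
  have h : SemiconjBy a (b * a) (a * b) := (mul_assoc a b a).symm
  exact (h.pow_right n).symm

/-- Let `Γ` be a group generated by two elements `α, β` admitting a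
surjection `φ` onto `ℤ ∗ ℤ/5ℤ` with `φ(α) = a` (the generator of `ℤ`), `φ(α·β) = b` (the
generator of `ℤ/5ℤ`), whose kernel is the cyclic subgroup generated by `(α·β)^5`, where
`(α·β)^5` is central in `Γ` and has infinite order.  Then the homomorphism from the Artin
group `A = ⟨x, y ∣ (xy)^5 = (yx)^5⟩` to `Γ` with `x ↦ α`, `y ↦ β` is an isomorphism. -/
theorem artin_group_of_autoequivalences
    {Γ : Type*} [Group Γ] (α β : Γ)
    (hgen : Subgroup.closure ({α, β} : Set Γ) = ⊤)
    (φ : Γ →* Monoid.Coprod (Multiplicative ℤ) (Multiplicative (ZMod 5)))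
    (hsurj : Function.Surjective φ)
    (hα : φ α = Monoid.Coprod.inl (Multiplicative.ofAdd (1 : ℤ)))
    (hαβ : φ (α * β) = Monoid.Coprod.inr (Multiplicative.ofAdd (1 : ZMod 5)))
    (hker : φ.ker = Subgroup.zpowers ((α * β) ^ 5))
    (hcentral : (α * β) ^ 5 ∈ Subgroup.center Γ)
    (hinf : ¬ IsOfFinOrder ((α * β) ^ 5)) :
    ∀ ψ : PresentedGroup artinRelator →* Γ,
      ψ (PresentedGroup.of 0) = α → ψ (PresentedGroup.of 1) = β →
      Function.Bijective ψ := by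
  intro ψ hx hy
  set A := PresentedGroup artinRelator
  set x : A := PresentedGroup.of 0 with hxdef
  set y : A := PresentedGroup.of 1 with hydef
  -- the defining relation holds in `A`
  have hrel : (x * y) ^ 5 = (y * x) ^ 5 := by
    have h1 : PresentedGroup.mk artinRelator
        ((FreeGroup.of 0 * FreeGroup.of 1) ^ 5 * ((FreeGroup.of 1 * FreeGroup.of 0) ^ 5)⁻¹)
        = 1 := by
      refine (QuotientGroup.eq_one_iff _).mpr ?_
      exact Subgroup.subset_normalClosure rfl
    rw [map_mul, map_inv, map_pow, map_pow, map_mul, map_mul, mul_inv_eq_one] at h1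
    exact h1
  have hzc : ∀ g : A, g * (x * y) ^ 5 = (x * y) ^ 5 * g := by
    have key : ∀ g : A, g ∈ Subgroup.centralizer ({(x * y) ^ 5} : Set A) := by
      intro g
      apply PresentedGroup.generated_by
      intro j
      rw [Subgroup.mem_centralizer_iff]
      rintro h rfl
      fin_cases j
      · show (x * y) ^ 5 * x = x * (x * y) ^ 5
        rw [conj_pow_aux, ← hrel]
      · show (x * y) ^ 5 * y = y * (x * y) ^ 5
        rw [hrel, conj_pow_aux, hrel]
    intro g
    exact ((Subgroup.mem_centralizer_iff.mp (key g)) _ rfl).symm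
  haveI hN : (Subgroup.zpowers ((x * y) ^ 5)).Normal := by
    constructor
    intro n hn g
    obtain ⟨k, rfl⟩ := Subgroup.mem_zpowers_iff.mp hn
    have hcz : Commute g ((x * y) ^ 5) := hzc g
    have hc : Commute g (((x * y) ^ 5) ^ k) := hcz.zpow_right k
    rw [hc.eq, mul_inv_cancel_right]
    exact Subgroup.mem_zpowers_iff.mpr ⟨k, rfl⟩
  -- the quotient of `A` by `z`
  set Q := A ⧸ Subgroup.zpowers ((x * y) ^ 5)
  set qmk : A →* Q := QuotientGroup.mk' (Subgroup.zpowers ((x * y) ^ 5)) with hqmk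
  have hq5 : (qmk (x * y)) ^ 5 = 1 := by
    rw [← map_pow]
    exact (QuotientGroup.eq_one_iff _).mpr (Subgroup.mem_zpowers _)
  -- section `σ : ℤ ∗ ℤ/5 → Q`
  set σa : Multiplicative ℤ →* Q := zpowersHom Q (qmk x) with hσa
  set f0 : ℤ →+ Additive Q := zmultiplesHom (Additive Q) (Additive.ofMul (qmk (x * y))) with hf0
  have hf05 : f0 5 = 0 := by
    have h5 : Additive.toMul (f0 5) = 1 := by
      show Additive.toMul ((5 : ℤ) • Additive.ofMul (qmk (x * y))) = 1
      rw [toMul_zsmul, toMul_ofMul]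
      exact_mod_cast hq5
    exact Additive.toMul.injective h5
  set σb : Multiplicative (ZMod 5) →* Q :=
    AddMonoidHom.toMultiplicativeLeft (ZMod.lift 5 ⟨f0, hf05⟩) with hσb
  set σ : Monoid.Coprod (Multiplicative ℤ) (Multiplicative (ZMod 5)) →* Q :=
    Monoid.Coprod.lift σa σb with hσ
  set π : A →* Monoid.Coprod (Multiplicative ℤ) (Multiplicative (ZMod 5)) := φ.comp ψ with hπ
  have hβ : φ β = (Monoid.Coprod.inl (Multiplicative.ofAdd (1 : ℤ)))⁻¹ *
      Monoid.Coprod.inr (Multiplicative.ofAdd (1 : ZMod 5)) := by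
    rw [← hα, ← hαβ, map_mul, inv_mul_cancel_left]
  have hσb1 : σb (Multiplicative.ofAdd (1 : ZMod 5)) = qmk (x * y) := by
    have h1 : ((1 : ℤ) : ZMod 5) = (1 : ZMod 5) := by norm_num
    rw [hσb]
    show Additive.toMul ((ZMod.lift 5 ⟨f0, hf05⟩) (Multiplicative.toAdd
      (Multiplicative.ofAdd (1 : ZMod 5)))) = qmk (x * y)
    rw [toAdd_ofAdd, ← h1, ZMod.lift_coe]
    show Additive.toMul ((1 : ℤ) • Additive.ofMul (qmk (x * y))) = qmk (x * y)
    simp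
  -- key commuting identity : σ ∘ π = qmk
  have key : σ.comp π = qmk := by
    apply PresentedGroup.ext
    intro i
    fin_cases i
    · show σ (φ (ψ x)) = qmk x
      rw [hx, hα, hσ, Monoid.Coprod.lift_apply_inl, hσa, zpowersHom_apply]
      simp
    · show σ (φ (ψ y)) = qmk y
      rw [hy, hβ, map_mul, map_inv, hσ, Monoid.Coprod.lift_apply_inl,
        Monoid.Coprod.lift_apply_inr, hσa, zpowersHom_apply, hσb1]
      simp only [toAdd_ofAdd, zpow_one, map_mul]
      rw [inv_mul_cancel_left]
  -- injectivity
  have hinj : Function.Injective ψ := by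
    rw [injective_iff_map_eq_one]
    intro g hg
    have h1 : qmk g = 1 := by
      rw [← key]
      show σ (φ (ψ g)) = 1
      rw [hg, map_one, map_one]
    obtain ⟨k, hk⟩ := Subgroup.mem_zpowers_iff.mp ((QuotientGroup.eq_one_iff g).mp h1)
    have hψz : ψ ((x * y) ^ 5) = (α * β) ^ 5 := by
      rw [map_pow, map_mul, hx, hy]
    have hpow : ((α * β) ^ 5) ^ k = 1 := by
      rw [← hψz, ← map_zpow, hk, hg]
    have hk0 : k = 0 := by
      by_contra hne
      apply hinf
      refine isOfFinOrder_iff_pow_eq_one.mpr ⟨k.natAbs, Int.natAbs_pos.mpr hne, ?_⟩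
      rcases Int.natAbs_eq k with h | h
      · rw [← zpow_natCast, ← h, hpow]
      · rw [← zpow_natCast, ← neg_neg (k.natAbs : ℤ), ← h, zpow_neg, hpow, inv_one]
    rw [← hk, hk0, zpow_zero]
  -- surjectivity
  have hsurjψ : Function.Surjective ψ := by
    rw [← MonoidHom.range_eq_top]
    rw [eq_top_iff, ← hgen]
    rw [Subgroup.closure_le]
    rintro g (rfl | rfl)
    · exact ⟨x, hx⟩
    · exact ⟨y, hy⟩
  exact ⟨hinj, hsurjψ⟩
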